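/- Over an algebraically closed field k of characteristic 3, if a homogeneous quartic f is divisible as f = x₄·(cubic) + (x₁x₂ - x₃²)·(quadric in x₁,x₂,x₃), and additionally every monomial of f either has some variable with exponent ≥ 3 or f is a multiple of x₄²(x₁x₂ - x₃²), then no such nonzero f defining a smooth surface exists; i.e., the coefficient constraints from the vanishing Hessian force a contradiction with smoothness along the conic. -/

import Mathlib

open MvPolynomial

noncomputable def m4 (a b c d : ℕ) : Fin 4 →₀ ℕ := Finsupp.equivFunOnFinite.symm ![a,b,c,d]

@[simp] lemma m4_apply (a b c d : ℕ) (i : Fin 4) : m4 a b c d i = ![a,b,c,d] i := rfl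

lemma degree_fin4 (d : Fin 4 →₀ ℕ) : d.degree = d 0 + d 1 + d 2 + d 3 := by
  rw [Finsupp.degree_apply, Finset.sum_subset (Finset.subset_univ _)
    (fun i _ hi => by simpa [Finsupp.mem_support_iff] using hi), Fin.sum_univ_four]

lemma qmul_coeff {K : Type*} [CommRing K] (g : MvPolynomial (Fin 4) K) (m : Fin 4 →₀ ℕ) :
    coeff m ((X 0 * X 1 - X 2^2) * g) =
    (if (Finsupp.single 0 1 + Finsupp.single 1 1) ≤ m then
        coeff (m - (Finsupp.single 0 1 + Finsupp.single 1 1)) g else 0)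
    - (if Finsupp.single 2 2 ≤ m then coeff (m - Finsupp.single 2 2) g else 0) := by
  rw [show (X 0 * X 1 : MvPolynomial (Fin 4) K)
      = monomial (Finsupp.single 0 1 + Finsupp.single 1 1) 1 by
    rw [X, X, monomial_mul, one_mul], X_pow_eq_monomial, sub_mul, coeff_sub,
    coeff_monomial_mul', coeff_monomial_mul']
  simp

lemma eval_comp4 {K : Type*} [CommRing K] (g : MvPolynomial (Fin 4) K) (z : K)
    (v : Fin 4 → Polynomial K) :
    Polynomial.eval z (MvPolynomial.aeval v g) = eval (fun i => Polynomial.eval z (v i)) g := by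
  have h := MvPolynomial.eval₂_comp_left (Polynomial.evalRingHom z)
    (algebraMap K (Polynomial K)) v g
  rw [MvPolynomial.aeval_def]
  refine h.trans ?_
  rw [show (Polynomial.evalRingHom z).comp (algebraMap K (Polynomial K)) = RingHom.id K by
    ext a; simp]
  rw [eval₂_id]; rfl

lemma eval_0100 {K : Type*} [CommRing K] (g : MvPolynomial (Fin 4) K)
    (hg : g.IsHomogeneous 3) :
    eval ![0,1,0,0] g = coeff (Finsupp.single 1 3) g := by
  rw [eval_eq']
  rw [Finset.sum_eq_single (Finsupp.single (1 : Fin 4) 3)]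
  · simp [Fin.prod_univ_four, Finsupp.single_apply]
  · intro b hb hne
    have hdeg : b.degree = 3 := by
      by_contra h
      exact (mem_support_iff.mp hb) (hg.coeff_eq_zero h)
    rw [degree_fin4] at hdeg
    rw [Fin.prod_univ_four]
    simp only [Matrix.cons_val_zero, Matrix.cons_val_one, Matrix.head_cons]
    by_cases h0 : b 0 = 0
    · by_cases h2 : b 2 = 0
      · by_cases h3 : b 3 = 0
        · exfalso; apply hne; ext i; fin_cases i <;>
            simp [Finsupp.single_apply, h0, h2, h3] <;> omega
        · simp [zero_pow h3]
      · simp [zero_pow h2]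
    · simp [zero_pow h0]
  · intro h
    simp [notMem_support_iff.mp h]

lemma psi_coeff {K : Type*} [CommRing K] (g : MvPolynomial (Fin 4) K)
    (hg : g.IsHomogeneous 3) :
    (MvPolynomial.aeval ![1, Polynomial.X, 0, 0] g : Polynomial K).coeff 3
      = coeff (Finsupp.single 1 3) g := by
  conv_lhs => rw [g.as_sum, map_sum, Polynomial.finset_sum_coeff]
  rw [Finset.sum_eq_single (Finsupp.single (1 : Fin 4) 3)]
  · rw [aeval_monomial, Finsupp.prod_fintype _ _ (fun i => pow_zero _), Fin.prod_univ_four]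
    simp [Finsupp.single_apply, Algebra.algebraMap_self_apply, Polynomial.coeff_C_mul]
  · intro b hb hne
    have hdeg : b.degree = 3 := by
      by_contra h
      exact (mem_support_iff.mp hb) (hg.coeff_eq_zero h)
    rw [degree_fin4] at hdeg
    rw [aeval_monomial, Finsupp.prod_fintype _ _ (fun i => pow_zero _), Fin.prod_univ_four]
    simp only [Matrix.cons_val_zero, Matrix.cons_val_one, Matrix.head_cons]
    by_cases h2 : b 2 = 0
    · by_cases h3 : b 3 = 0
      · have h1 : b 1 ≠ 3 := by
          intro h1
          apply hne; ext i; fin_cases i <;>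
            simp [Finsupp.single_apply, h1, h2, h3] <;> omega
        simp [h2, h3, Polynomial.algebraMap_eq, Polynomial.coeff_X_pow, Ne.symm h1]
      · simp [zero_pow h3]
    · simp [zero_pow h2]
  · intro h
    simp [notMem_support_iff.mp h]


/-- Degeneration argument from Proposition 2.2 in characteristic 3: suppose the
homogeneous quartic `f = x₄·g₃ + (x₁x₂ - x₃²)·g₂` (with `g₂` a quadric in
`x₁, x₂, x₃` only), and moreover — as forced by the identical vanishing of the
Hessian quadratic form along the conic — `f` is, up to a multiple of
`x₄²(x₁x₂ - x₃²)`, supported on monomials having some variable with exponent `≥ 3`.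
Then `f` cannot define a smooth surface: the smoothness condition yields a
contradiction. (Variables are indexed `0,…,3`, so `X 0 = x₁, …, X 3 = x₄`.) -/
theorem stmt_11 {k : Type*} [Field k] [IsAlgClosed k] [CharP k 3]
    (f g3 g2 : MvPolynomial (Fin 4) k)
    (hf4 : f.IsHomogeneous 4) (hg3 : g3.IsHomogeneous 3) (hg2 : g2.IsHomogeneous 2)
    (hg2vars : ∀ m ∈ g2.support, m 3 = 0)
    (hshape : f = X 3 * g3 + (X 0 * X 1 - X 2 ^ 2) * g2)
    (hsupp : ∃ c : k, ∀ m ∈ (f - c • (X 3 ^ 2 * (X 0 * X 1 - X 2 ^ 2))).support,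
      ∃ i, 3 ≤ m i)
    (hsmooth : ∀ x : Fin 4 → k, x ≠ 0 →
      ¬(eval x f = 0 ∧ ∀ i, eval x (pderiv i f) = 0)) :
    False := by
  classical
  obtain ⟨c, hc⟩ := hsupp
  -- Step 1: coefficients of (x₁x₂ - x₃²)·g₂ vanish at monomials with m 3 = 0, all exponents ≤ 2
  have key : ∀ m : Fin 4 →₀ ℕ, m 3 = 0 → (¬ ∃ i, 3 ≤ m i) →
      coeff m ((X 0 * X 1 - X 2 ^ 2) * g2) = 0 := by
    intro m h3 hno
    have hm : coeff m (f - c • (X 3 ^ 2 * (X 0 * X 1 - X 2 ^ 2))) = 0 :=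
      notMem_support_iff.mp (fun h => hno (hc m h))
    have h1 : coeff m (X 3 * g3) = 0 := by
      rw [coeff_X_mul']; simp [Finsupp.mem_support_iff, h3]
    have h2 : coeff m ((X 3 ^ 2 * (X 0 * X 1 - X 2 ^ 2) : MvPolynomial (Fin 4) k)) = 0 := by
      rw [pow_two, mul_assoc, coeff_X_mul']; simp [Finsupp.mem_support_iff, h3]
    rw [coeff_sub, coeff_smul, h2, smul_zero, sub_zero, hshape, coeff_add, h1, zero_add] at hm
    exact hm
  -- Step 2: the six coefficients of g2 vanish
  have k1 : coeff (m4 1 1 0 0) g2 = 0 := by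
    have h := key (m4 2 2 0 0) (by simp) (by rintro ⟨i, hi⟩; fin_cases i <;> simp at hi)
    rw [qmul_coeff, if_pos (by rw [Finsupp.le_def]; intro i; fin_cases i <;> simp),
      if_neg (by rw [Finsupp.le_def]; push_neg; exact ⟨2, by simp⟩), sub_zero,
      show m4 2 2 0 0 - (Finsupp.single 0 1 + Finsupp.single 1 1) = m4 1 1 0 0 by
        ext i; rw [Finsupp.tsub_apply]; fin_cases i <;> simp] at h
    exact h
  have k2 : coeff (m4 1 0 1 0) g2 = 0 := by
    have h := key (m4 2 1 1 0) (by simp) (by rintro ⟨i, hi⟩; fin_cases i <;> simp at hi)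
    rw [qmul_coeff, if_pos (by rw [Finsupp.le_def]; intro i; fin_cases i <;> simp),
      if_neg (by rw [Finsupp.le_def]; push_neg; exact ⟨2, by simp⟩), sub_zero,
      show m4 2 1 1 0 - (Finsupp.single 0 1 + Finsupp.single 1 1) = m4 1 0 1 0 by
        ext i; rw [Finsupp.tsub_apply]; fin_cases i <;> simp] at h
    exact h
  have k3 : coeff (m4 0 1 1 0) g2 = 0 := by
    have h := key (m4 1 2 1 0) (by simp) (by rintro ⟨i, hi⟩; fin_cases i <;> simp at hi)
    rw [qmul_coeff, if_pos (by rw [Finsupp.le_def]; intro i; fin_cases i <;> simp),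
      if_neg (by rw [Finsupp.le_def]; push_neg; exact ⟨2, by simp⟩), sub_zero,
      show m4 1 2 1 0 - (Finsupp.single 0 1 + Finsupp.single 1 1) = m4 0 1 1 0 by
        ext i; rw [Finsupp.tsub_apply]; fin_cases i <;> simp] at h
    exact h
  have k4 : coeff (m4 2 0 0 0) g2 = 0 := by
    have h := key (m4 2 0 2 0) (by simp) (by rintro ⟨i, hi⟩; fin_cases i <;> simp at hi)
    rw [qmul_coeff,
      if_neg (by rw [Finsupp.le_def]; push_neg; exact ⟨1, by simp⟩),
      if_pos (by rw [Finsupp.le_def]; intro i; fin_cases i <;> simp),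
      show m4 2 0 2 0 - Finsupp.single 2 2 = m4 2 0 0 0 by
        ext i; rw [Finsupp.tsub_apply]; fin_cases i <;> simp,
      zero_sub, neg_eq_zero] at h
    exact h
  have k5 : coeff (m4 0 2 0 0) g2 = 0 := by
    have h := key (m4 0 2 2 0) (by simp) (by rintro ⟨i, hi⟩; fin_cases i <;> simp at hi)
    rw [qmul_coeff,
      if_neg (by rw [Finsupp.le_def]; push_neg; exact ⟨0, by simp⟩),
      if_pos (by rw [Finsupp.le_def]; intro i; fin_cases i <;> simp),
      show m4 0 2 2 0 - Finsupp.single 2 2 = m4 0 2 0 0 by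
        ext i; rw [Finsupp.tsub_apply]; fin_cases i <;> simp,
      zero_sub, neg_eq_zero] at h
    exact h
  have k6 : coeff (m4 0 0 2 0) g2 = 0 := by
    have h := key (m4 1 1 2 0) (by simp) (by rintro ⟨i, hi⟩; fin_cases i <;> simp at hi)
    rw [qmul_coeff,
      if_pos (by rw [Finsupp.le_def]; intro i; fin_cases i <;> simp),
      if_pos (by rw [Finsupp.le_def]; intro i; fin_cases i <;> simp),
      show m4 1 1 2 0 - (Finsupp.single 0 1 + Finsupp.single 1 1) = m4 0 0 2 0 by
        ext i; rw [Finsupp.tsub_apply]; fin_cases i <;> simp,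
      show m4 1 1 2 0 - Finsupp.single 2 2 = m4 1 1 0 0 by
        ext i; rw [Finsupp.tsub_apply]; fin_cases i <;> simp,
      k1, sub_zero] at h
    exact h
  -- Step 3: g2 = 0
  have hg2z : g2 = 0 := by
    rw [eq_zero_iff]
    intro d
    by_contra hd
    have hds : d ∈ g2.support := mem_support_iff.mpr hd
    have h3 := hg2vars d hds
    have hdeg : d.degree = 2 := by
      by_contra h
      exact hd (hg2.coeff_eq_zero h)
    rw [degree_fin4, h3, add_zero] at hdeg
    have hcases : (d 0 = 1 ∧ d 1 = 1 ∧ d 2 = 0) ∨ (d 0 = 1 ∧ d 1 = 0 ∧ d 2 = 1) ∨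
        (d 0 = 0 ∧ d 1 = 1 ∧ d 2 = 1) ∨ (d 0 = 2 ∧ d 1 = 0 ∧ d 2 = 0) ∨
        (d 0 = 0 ∧ d 1 = 2 ∧ d 2 = 0) ∨ (d 0 = 0 ∧ d 1 = 0 ∧ d 2 = 2) := by omega
    rcases hcases with ⟨h0,h1,h2⟩|⟨h0,h1,h2⟩|⟨h0,h1,h2⟩|⟨h0,h1,h2⟩|⟨h0,h1,h2⟩|⟨h0,h1,h2⟩ <;>
      [ (have : d = m4 1 1 0 0 := by ext i; fin_cases i <;> simp [h0, h1, h2, h3]);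
        (have : d = m4 1 0 1 0 := by ext i; fin_cases i <;> simp [h0, h1, h2, h3]);
        (have : d = m4 0 1 1 0 := by ext i; fin_cases i <;> simp [h0, h1, h2, h3]);
        (have : d = m4 2 0 0 0 := by ext i; fin_cases i <;> simp [h0, h1, h2, h3]);
        (have : d = m4 0 2 0 0 := by ext i; fin_cases i <;> simp [h0, h1, h2, h3]);
        (have : d = m4 0 0 2 0 := by ext i; fin_cases i <;> simp [h0, h1, h2, h3])] <;>
      rw [this] at hd <;> [exact hd k1; exact hd k2; exact hd k3; exact hd k4;
        exact hd k5; exact hd k6]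
  rw [hg2z, mul_zero, add_zero] at hshape
  -- Step 4: find a zero of g3 on the plane x₄ = 0
  obtain ⟨x, hx0, hx3, hgx⟩ : ∃ x : Fin 4 → k, x ≠ 0 ∧ x 3 = 0 ∧ eval x g3 = 0 := by
    by_cases hd : coeff (Finsupp.single 1 3) g3 = 0
    · exact ⟨![0,1,0,0], fun h => by simpa using congrFun h 1, by simp,
        by rw [eval_0100 g3 hg3, hd]⟩
    · set ψ : Polynomial k := MvPolynomial.aeval ![1, Polynomial.X, 0, 0] g3 with hψ
      have hψ3 : ψ.coeff 3 ≠ 0 := by rw [hψ, psi_coeff g3 hg3]; exact hd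
      have hdeg : ψ.degree ≠ 0 := by
        intro h
        have := Polynomial.le_degree_of_ne_zero hψ3
        rw [h] at this
        exact absurd this (by norm_num)
      obtain ⟨z, hz⟩ := IsAlgClosed.exists_root ψ hdeg
      refine ⟨![1, z, 0, 0], fun h => by simpa using congrFun h 0, by simp, ?_⟩
      have hcomp := eval_comp4 g3 z ![1, Polynomial.X, 0, 0]
      rw [show (fun i => Polynomial.eval z (![1, Polynomial.X, 0, 0] i)) = ![1, z, 0, 0] by
        funext i; fin_cases i <;> simp] at hcomp
      rw [← hcomp]
      exact hz
  -- Step 5: contradiction with smoothness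
  apply hsmooth x hx0
  constructor
  · rw [hshape, eval_mul, eval_X, hx3, zero_mul]
  · intro i
    rw [hshape, pderiv_mul, map_add, eval_mul, eval_mul, eval_X, hx3, zero_mul, add_zero,
      pderiv_X]
    rcases eq_or_ne i 3 with h | h
    · subst h; simp [hgx]
    · simp [Pi.single_eq_of_ne' h]
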